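/- ∫₀^{π/2} ln(1 + cos x) dx = 2G − (π/2) ln 2, where G is Catalan's constant. -/

import Mathlib

open Real

open MeasureTheory intervalIntegral Set Filter Topology

noncomputable def catalanG : ℝ := ∑' n : ℕ, (-1 : ℝ) ^ n / (2 * (n : ℝ) + 1) ^ 2

lemma il_log01 : IntervalIntegrable Real.log volume 0 1 := by
  have hc : ContinuousOn (fun x : ℝ => x - x * Real.log x) (Icc 0 1) :=
    (continuous_id.sub Real.continuous_mul_log).continuousOn
  have h := integrableOn_deriv_of_nonneg hc
    (g' := fun x => -Real.log x)
    (fun x hx => ((hasDerivAt_id' x).sub (Real.hasDerivAt_mul_log hx.1.ne')).congr_deriv (by show _ = -Real.log x; ring))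
    (fun x hx => by
      have := Real.log_nonpos hx.1.le hx.2.le
      show (0:ℝ) ≤ -Real.log x
      linarith)
  rw [intervalIntegrable_iff_integrableOn_Ioc_of_le zero_le_one]
  have := h.neg
  simp only [Pi.neg_def, neg_neg] at this
  exact this

lemma il_log0b {b : ℝ} (hb : 0 ≤ b) : IntervalIntegrable Real.log volume 0 b := by
  rcases le_total b 1 with h | h
  · exact il_log01.mono_set (by rw [uIcc_of_le hb, uIcc_of_le zero_le_one]; exact Icc_subset_Icc le_rfl h)
  · exact il_log01.trans (intervalIntegrable_log (by
      rw [Set.uIcc_of_le h]; rintro ⟨h0, -⟩; linarith))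

lemma il_pow_neg_log (k : ℕ) :
    IntervalIntegrable (fun t => t ^ k * (-Real.log t)) volume 0 1 := by
  apply (il_log01.neg).mono_fun
  · exact ((measurable_id.pow_const k).mul Real.measurable_log.neg).aestronglyMeasurable
  · filter_upwards [ae_restrict_mem measurableSet_uIoc] with t ht
    rw [Set.uIoc_of_le zero_le_one] at ht
    have h1 : |t ^ k| ≤ 1 := by
      rw [abs_pow]
      apply pow_le_one₀ (abs_nonneg t)
      rw [abs_le]; constructor <;> nlinarith [ht.1, ht.2]
    simp only [norm_eq_abs, abs_mul, abs_neg, Pi.neg_apply]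
    nlinarith [abs_nonneg (Real.log t), abs_nonneg (t^k)]

lemma integral_pow_neg_log (k : ℕ) :
    ∫ t in (0:ℝ)..1, t ^ k * (-Real.log t) = 1 / ((k : ℝ) + 1) ^ 2 := by
  set c : ℝ := (k : ℝ) + 1 with hc
  have hc0 : (0:ℝ) < c := by positivity
  set F : ℝ → ℝ := fun t => t ^ (k+1) / c ^ 2 - t ^ k * (t * Real.log t) / c with hF
  have hder : ∀ t ∈ Ioo (0:ℝ) 1, HasDerivAt F (t ^ k * (-Real.log t)) t := by
    intro t ht
    have h1 : HasDerivAt (fun t : ℝ => t ^ (k+1) / c ^ 2) (((k:ℝ)+1) * t ^ k / c ^ 2) t := by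
      simpa using ((hasDerivAt_pow (k+1) t).div_const (c^2))
    have h2 : HasDerivAt (fun t : ℝ => t ^ k * (t * Real.log t) / c)
        ((((k:ℝ)) * t ^ (k-1) * (t * Real.log t) + t ^ k * (Real.log t + 1)) / c) t :=
      (((hasDerivAt_pow k t).mul (Real.hasDerivAt_mul_log ht.1.ne')).div_const c)
    have := h1.sub h2
    refine this.congr_deriv ?_
    have key : (k:ℝ) * t ^ (k-1) * (t * Real.log t) = (k:ℝ) * t ^ k * Real.log t := by
      rcases Nat.eq_zero_or_pos k with hk | hk
      · subst hk; simp
      · have hpow : t ^ (k-1) * t = t ^ k := by rw [← pow_succ]; congr 1; omega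
        rw [show (k:ℝ) * t ^ (k-1) * (t * Real.log t)
            = (k:ℝ) * (t ^ (k-1) * t) * Real.log t by ring, hpow]
    rw [key]
    field_simp
    ring
  have hcont : ContinuousOn F (Icc 0 1) := by
    apply ContinuousOn.sub
    · exact (continuous_pow _).continuousOn.div_const _
    · exact (((continuous_pow k).mul Real.continuous_mul_log).div_const c).continuousOn
  have hint := il_pow_neg_log k
  have := integral_eq_sub_of_hasDeriv_right_of_le zero_le_one hcont
    (fun t ht => (hder t ht).hasDerivWithinAt) hint
  rw [this]
  simp [F, hc]



lemma summable_catalan : Summable (fun n : ℕ => (-1 : ℝ) ^ n / (2 * (n : ℝ) + 1) ^ 2) := by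
  apply Summable.of_abs
  have h : Summable (fun n : ℕ => 1 / ((n : ℝ) + 1) ^ 2) := by
    have := (summable_nat_add_iff (f := fun n : ℕ => 1 / (n : ℝ) ^ 2) 1).2
      (Real.summable_one_div_nat_pow.2 one_lt_two)
    simpa using this
  apply h.of_nonneg_of_le (fun n => abs_nonneg _)
  intro n
  rw [abs_div, abs_pow, abs_neg, abs_one, one_pow]
  have h1 : ((n:ℝ) + 1) ^ 2 ≤ |(2 * (n:ℝ) + 1) ^ 2| := by
    rw [abs_of_nonneg (by positivity)]
    nlinarith [Nat.cast_nonneg (α := ℝ) n]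
  exact div_le_div_of_nonneg_left one_pos.le (by positivity) h1


lemma catalanG_eq_integral :
    catalanG = ∫ t in (0:ℝ)..1, (-Real.log t) / (1 + t ^ 2) := by
  set s : ℕ → ℝ := fun n => (-1 : ℝ) ^ n / (2 * (n : ℝ) + 1) ^ 2 with hs
  set f : ℝ → ℝ := fun t => (-Real.log t) / (1 + t ^ 2) with hf
  set F : ℕ → ℝ → ℝ :=
    fun N t => (∑ n ∈ Finset.range N, (-1:ℝ) ^ n * t ^ (2 * n)) * (-Real.log t) with hFdef
  have hgeom : ∀ t : ℝ, ∀ N : ℕ,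
      (∑ n ∈ Finset.range N, (-1:ℝ) ^ n * t ^ (2 * n)) = ((-t^2) ^ N - 1) / (-t^2 - 1) := by
    intro t N
    have hne : (-t^2 : ℝ) ≠ 1 := by nlinarith [sq_nonneg t]
    rw [← geom_sum_eq hne N]
    congr 1
    ext n
    rw [neg_pow, pow_mul]
    ring
  -- partial sums of s tend to catalanG
  have h1 : Tendsto (fun N => ∑ n ∈ Finset.range N, s n) atTop (𝓝 catalanG) :=
    (summable_catalan.hasSum_iff_tendsto_nat).1 summable_catalan.hasSum
  -- integral of F N equals partial sum
  have h2 : ∀ N : ℕ, (∫ t in (0:ℝ)..1, F N t) = ∑ n ∈ Finset.range N, s n := by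
    intro N
    have : ∀ t : ℝ, F N t = ∑ n ∈ Finset.range N, (-1:ℝ) ^ n * (t ^ (2*n) * (-Real.log t)) := by
      intro t
      rw [hFdef]
      simp only
      rw [Finset.sum_mul]
      congr 1; ext n; ring
    rw [intervalIntegral.integral_congr (fun t _ => this t),
      intervalIntegral.integral_finset_sum
        (fun n _ => (il_pow_neg_log (2*n)).const_mul ((-1:ℝ)^n))]
    congr 1; ext n
    rw [intervalIntegral.integral_const_mul, integral_pow_neg_log (2*n), hs]
    push_cast
    ring
  -- dominated convergence
  have h3 : Tendsto (fun N => ∫ t in Ioc (0:ℝ) 1, F N t) atTop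
      (𝓝 (∫ t in Ioc (0:ℝ) 1, f t)) := by
    apply MeasureTheory.tendsto_integral_of_dominated_convergence
      (bound := fun t => 2 * |Real.log t|)
    · intro N
      apply Measurable.aestronglyMeasurable
      exact (Finset.measurable_sum _ (fun n _ =>
        (measurable_id.pow_const (2*n)).const_mul _)).mul Real.measurable_log.neg
    · have := (intervalIntegrable_iff_integrableOn_Ioc_of_le zero_le_one).1 il_log01
      exact (this.abs.const_mul 2)
    · intro N
      filter_upwards [ae_restrict_mem measurableSet_Ioc] with t ht
      have ht2 : t ^ 2 ≤ 1 := by nlinarith [ht.1, ht.2]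
      have ht2' : (0:ℝ) < t ^ 2 := pow_pos ht.1 2
      have hb : |∑ n ∈ Finset.range N, (-1:ℝ) ^ n * t ^ (2 * n)| ≤ 2 := by
        rw [hgeom t N, abs_div]
        have hd : |(-t^2 - 1 : ℝ)| = t^2 + 1 := by
          rw [abs_of_neg (by nlinarith)]; ring
        have hn : |((-t^2 : ℝ)) ^ N - 1| ≤ 2 := by
          have : |(-t^2 : ℝ) ^ N| ≤ 1 := by
            rw [abs_pow, abs_of_neg (by nlinarith), neg_neg]
            exact pow_le_one₀ ht2'.le ht2
          have h1' := abs_sub ((-t^2:ℝ)^N) (1:ℝ)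
          rw [abs_one] at h1'
          linarith
        rw [hd]
        calc |((-t^2:ℝ)) ^ N - 1| / (t^2 + 1) ≤ 2 / (t^2+1) := by
              exact div_le_div_of_nonneg_right hn (by positivity) |>.trans_eq rfl
          _ ≤ 2 := by
              rw [div_le_iff₀ (by positivity)]
              nlinarith
      calc ‖F N t‖ = |∑ n ∈ Finset.range N, (-1:ℝ) ^ n * t ^ (2 * n)| * |Real.log t| := by
            rw [hFdef]; simp [abs_mul]
        _ ≤ 2 * |Real.log t| := by
            apply mul_le_mul_of_nonneg_right hb (abs_nonneg _)
    · filter_upwards [ae_restrict_mem measurableSet_Ioc] with t ht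
      rcases eq_or_lt_of_le ht.2 with h1' | h1'
      · subst h1'
        have hFz : (fun N => F N 1) = fun _ => (0:ℝ) := by
          funext N; rw [hFdef]; simp
        rw [hFz, hf]
        simp only [Real.log_one, neg_zero, zero_div]
        exact tendsto_const_nhds
      · have habs : |(-t^2 : ℝ)| < 1 := by
          rw [abs_of_nonpos (by nlinarith)]
          nlinarith [ht.1]
        have hpow : Tendsto (fun N : ℕ => (-t^2 : ℝ) ^ N) atTop (𝓝 0) :=
          tendsto_pow_atTop_nhds_zero_of_abs_lt_one habs
        have hden : (-t^2 - 1 : ℝ) ≠ 0 := by nlinarith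
        have : Tendsto (fun N : ℕ => F N t) atTop
            (𝓝 (((0 : ℝ) - 1) / (-t^2 - 1) * (-Real.log t))) := by
          simp only [hFdef, hgeom t]
          exact (((hpow.sub_const 1).div_const _).mul_const _)
        convert this using 2
        rw [hf]
        field_simp
        ring
  rw [intervalIntegral.integral_of_le zero_le_one]
  have h4 : Tendsto (fun N => ∑ n ∈ Finset.range N, s n) atTop
      (𝓝 (∫ t in Ioc (0:ℝ) 1, f t)) := by
    convert h3 using 2 with N
    rw [← h2 N, intervalIntegral.integral_of_le zero_le_one]
  exact tendsto_nhds_unique h1 h4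

lemma il_log_sin {b : ℝ} (h0 : 0 ≤ b) (hb : b ≤ π / 2) :
    IntervalIntegrable (fun x => Real.log (Real.sin x)) volume 0 b := by
  apply IntervalIntegrable.mono_fun
    (f := fun x => Real.log (π/2) - Real.log x)
    ((intervalIntegrable_const (c := Real.log (π/2))).sub (il_log0b h0))
  · exact (Real.measurable_log.comp Real.measurable_sin).aestronglyMeasurable
  · filter_upwards [ae_restrict_mem measurableSet_uIoc] with x hx
    rw [Set.uIoc_of_le h0] at hx
    have hx0 : 0 < x := hx.1
    have hxb : x ≤ π / 2 := hx.2.trans hb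
    have hsin : 2 / π * x ≤ Real.sin x := Real.mul_le_sin hx0.le hxb
    have hpos : (0:ℝ) < 2 / π * x := by
      have := Real.pi_pos; positivity
    have hlog1 : Real.log (2 / π * x) ≤ Real.log (Real.sin x) :=
      Real.log_le_log hpos hsin
    have hlog2 : Real.log (2 / π * x) = Real.log x - Real.log (π / 2) := by
      rw [Real.log_mul (by have := Real.pi_pos; positivity) hx0.ne', show (2/π : ℝ) = (π/2)⁻¹ by
        field_simp, Real.log_inv]
      ring
    have hsin1 : Real.log (Real.sin x) ≤ 0 := Real.log_nonpos (Real.sin_nonneg_of_nonneg_of_le_pi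
      hx0.le (by linarith [Real.pi_pos])) (Real.sin_le_one x)
    have hge : Real.log (π/2) - Real.log x ≥ 0 := by
      rw [hlog2] at hlog1; linarith
    simp only [norm_eq_abs]
    rw [abs_of_nonpos hsin1, abs_of_nonneg hge]
    rw [hlog2] at hlog1
    linarith

lemma il_log_cos : IntervalIntegrable (fun x => Real.log (Real.cos x)) volume 0 (π/4) := by
  apply ContinuousOn.intervalIntegrable
  apply ContinuousOn.log (Real.continuous_cos.continuousOn)
  intro x hx
  rw [Set.uIcc_of_le (by positivity)] at hx
  have := Real.pi_pos
  exact (Real.cos_pos_of_mem_Ioo ⟨by linarith [hx.1], by linarith [hx.2]⟩).ne'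

lemma integral_log_sin_half :
    ∫ x in (0:ℝ)..(π/2), Real.log (Real.sin x) = -(π/2) * Real.log 2 := by
  have hpi := Real.pi_pos
  have hL : IntervalIntegrable (fun x => Real.log (Real.sin x)) volume 0 (π/4) :=
    il_log_sin (by positivity) (by linarith)
  have hM : IntervalIntegrable (fun x => Real.log (Real.sin x)) volume 0 (π/2) :=
    il_log_sin (by positivity) le_rfl
  have h2 : IntervalIntegrable (fun x => Real.log (Real.sin x)) volume (π/4) (π/2) :=
    hM.mono_set (by
      rw [Set.uIcc_of_le (by linarith), Set.uIcc_of_le (by linarith)]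
      exact Icc_subset_Icc (by positivity) le_rfl)
  -- step b
  have hb : ∫ x in (π/4:ℝ)..(π/2), Real.log (Real.sin x)
      = ∫ x in (0:ℝ)..(π/4), Real.log (Real.cos x) := by
    have := intervalIntegral.integral_comp_sub_left (a := (0:ℝ)) (b := π/4)
      (fun u => Real.log (Real.sin u)) (π/2)
    rw [show π/2 - π/4 = π/4 by ring, sub_zero] at this
    rw [← this]
    apply intervalIntegral.integral_congr
    intro x _
    simp only [Real.sin_pi_div_two_sub]
  -- step a
  have ha := intervalIntegral.integral_add_adjacent_intervals hL h2
  -- step c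
  have hc : ∫ x in (0:ℝ)..(π/4), (Real.log (Real.sin x) + Real.log (Real.cos x))
      = ∫ x in (0:ℝ)..(π/4), (Real.log (Real.sin (2*x)) - Real.log 2) := by
    apply intervalIntegral.integral_congr_ae
    filter_upwards with x hx
    rw [Set.uIoc_of_le (by positivity)] at hx
    have hx0 : 0 < x := hx.1
    have hx4 : x ≤ π/4 := hx.2
    have hsin : 0 < Real.sin x := Real.sin_pos_of_pos_of_lt_pi hx0 (by linarith)
    have hcos : 0 < Real.cos x := Real.cos_pos_of_mem_Ioo ⟨by linarith, by linarith⟩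
    show Real.log (Real.sin x) + Real.log (Real.cos x)
      = Real.log (Real.sin (2*x)) - Real.log 2
    rw [Real.sin_two_mul, mul_assoc, Real.log_mul (two_ne_zero) (mul_pos hsin hcos).ne',
      Real.log_mul hsin.ne' hcos.ne']
    ring
  -- step d
  have hd : ∫ x in (0:ℝ)..(π/4), Real.log (Real.sin (2*x))
      = (1/2) * ∫ x in (0:ℝ)..(π/2), Real.log (Real.sin x) := by
    have := intervalIntegral.integral_comp_mul_left (a := (0:ℝ)) (b := π/4)
      (fun u => Real.log (Real.sin u)) (c := 2) (by norm_num)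
    rw [this]
    rw [show 2 * (0:ℝ) = 0 by ring, show 2 * (π/4) = π/2 by ring]
    simp
  have hint2 : IntervalIntegrable (fun x => Real.log (Real.sin (2*x))) volume 0 (π/4) := by
    have := hM.comp_mul_left (c := 2) (by simp) (by simp)
    rw [show (0:ℝ)/2 = 0 by ring, show (π/2)/2 = π/4 by ring] at this
    exact this
  have hsplit : ∫ x in (0:ℝ)..(π/4), (Real.log (Real.sin (2*x)) - Real.log 2)
      = (∫ x in (0:ℝ)..(π/4), Real.log (Real.sin (2*x))) - (π/4) * Real.log 2 := by
    rw [intervalIntegral.integral_sub hint2 (intervalIntegrable_const (c := Real.log 2))]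
    simp
  have hadd : ∫ x in (0:ℝ)..(π/4), (Real.log (Real.sin x) + Real.log (Real.cos x))
      = (∫ x in (0:ℝ)..(π/4), Real.log (Real.sin x))
        + ∫ x in (0:ℝ)..(π/4), Real.log (Real.cos x) :=
    intervalIntegral.integral_add hL il_log_cos
  set M := ∫ x in (0:ℝ)..(π/2), Real.log (Real.sin x)
  set L := ∫ x in (0:ℝ)..(π/4), Real.log (Real.sin x)
  set J := ∫ x in (0:ℝ)..(π/4), Real.log (Real.cos x)
  have e1 : L + J = M := by rw [← ha, ← hb]
  have e2 : L + J = (1/2) * M - (π/4) * Real.log 2 := by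
    rw [← hadd, hc, hsplit, hd]
  rw [← e1, e2]
  linarith [e1, e2]

lemma il_neg_log_div : IntervalIntegrable (fun t => (-Real.log t)/(1+t^2)) volume 0 1 := by
  apply IntervalIntegrable.mono_fun il_log01.neg
  · apply Measurable.aestronglyMeasurable
    exact Real.measurable_log.neg.div ((measurable_const.add (measurable_id.pow_const 2)))
  · filter_upwards [ae_restrict_mem measurableSet_uIoc] with t ht
    rw [Set.uIoc_of_le zero_le_one] at ht
    simp only [norm_eq_abs, abs_div, abs_neg, Pi.neg_apply]
    have h1 : (1:ℝ) ≤ |1 + t^2| := by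
      rw [abs_of_pos (by positivity)]; nlinarith [sq_nonneg t]
    calc |Real.log t| / |1 + t^2| ≤ |Real.log t| / 1 :=
          div_le_div_of_nonneg_left (abs_nonneg _) one_pos h1 |>.trans_eq rfl
      _ = |Real.log t| := div_one _
      _ ≤ |Real.log t| := le_rfl

lemma log_cot_integral :
    ∫ x in (0:ℝ)..(π/4), (Real.log (Real.cos x) - Real.log (Real.sin x))
      = ∫ t in (0:ℝ)..1, (-Real.log t)/(1+t^2) := by
  have hpi := Real.pi_pos
  set g : ℝ → ℝ := fun t => (-Real.log t)/(1+t^2) with hg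
  set Φ : ℝ → ℝ := fun c => ∫ x in c..(π/4), (Real.log (Real.cos x) - Real.log (Real.sin x))
    with hΦdef
  set Ψ : ℝ → ℝ := fun a => ∫ t in a..1, g t with hΨdef
  -- substitution on compact subintervals
  have hsub : ∀ c : ℝ, 0 < c → c ≤ π/4 → Φ c = Ψ (Real.tan c) := by
    intro c hc0 hc4
    have huIcc : uIcc c (π/4) = Icc c (π/4) := uIcc_of_le hc4
    have hmem : ∀ x ∈ uIcc c (π/4), 0 < x ∧ x < π/2 := by
      intro x hx
      rw [huIcc] at hx
      exact ⟨lt_of_lt_of_le hc0 hx.1, lt_of_le_of_lt hx.2 (by linarith)⟩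
    have hcosne : ∀ x ∈ uIcc c (π/4), Real.cos x ≠ 0 := by
      intro x hx
      have h := hmem x hx
      exact (Real.cos_pos_of_mem_Ioo ⟨by linarith [h.1], h.2⟩).ne'
    have hder : ∀ x ∈ uIcc c (π/4), HasDerivAt Real.tan (1 / Real.cos x ^ 2) x :=
      fun x hx => Real.hasDerivAt_tan (hcosne x hx)
    have hcont : ContinuousOn (fun x => 1 / Real.cos x ^ 2) (uIcc c (π/4)) := by
      apply ContinuousOn.div continuousOn_const
        (Real.continuous_cos.continuousOn.pow 2)
      exact fun x hx => pow_ne_zero 2 (hcosne x hx)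
    have hgcont : ContinuousOn g (Real.tan '' uIcc c (π/4)) := by
      apply ContinuousOn.mono (s := Ioi (0:ℝ))
      · apply ContinuousOn.div
        · exact (Real.continuousOn_log.mono (fun x hx => ne_of_gt hx)).neg
        · exact (continuousOn_const.add ((continuous_pow 2).continuousOn))
        · intro t _; positivity
      · rintro _ ⟨x, hx, rfl⟩
        have h := hmem x hx
        exact Real.tan_pos_of_pos_of_lt_pi_div_two h.1 h.2
    have key := intervalIntegral.integral_comp_smul_deriv' (g := g) hder hcont hgcont
    have heq : ∀ x ∈ uIcc c (π/4),
        Real.log (Real.cos x) - Real.log (Real.sin x)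
          = (1 / Real.cos x ^ 2) • (g ∘ Real.tan) x := by
      intro x hx
      have h := hmem x hx
      have hcos : 0 < Real.cos x := Real.cos_pos_of_mem_Ioo ⟨by linarith [h.1], h.2⟩
      have hsin : 0 < Real.sin x := Real.sin_pos_of_pos_of_lt_pi h.1 (by linarith [h.2, hpi])
      have htan : 0 < Real.tan x := Real.tan_pos_of_pos_of_lt_pi_div_two h.1 h.2
      have h1 : (1 + Real.tan x ^ 2) = (Real.cos x ^ 2)⁻¹ := by
        rw [← Real.inv_one_add_tan_sq hcos.ne', inv_inv]
      have hlt : Real.log (Real.tan x) = Real.log (Real.sin x) - Real.log (Real.cos x) := by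
        rw [Real.tan_eq_sin_div_cos, Real.log_div hsin.ne' hcos.ne']
      simp only [Function.comp_apply, smul_eq_mul, hg]
      rw [h1, hlt]
      have hc2 : Real.cos x ^ 2 ≠ 0 := by positivity
      field_simp
      ring
    rw [hΦdef]
    simp only
    rw [intervalIntegral.integral_congr heq, key, Real.tan_pi_div_four]
  -- continuity of Φ and Ψ
  have hpi4 : (0:ℝ) ≤ π/4 := by linarith
  have hΦint : IntegrableOn (fun x => Real.log (Real.cos x) - Real.log (Real.sin x))
      (uIcc 0 (π/4)) volume := by
    rw [uIcc_of_le hpi4, integrableOn_Icc_iff_integrableOn_Ioc]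
    exact (intervalIntegrable_iff_integrableOn_Ioc_of_le hpi4).1
      (il_log_cos.sub (il_log_sin hpi4 (by linarith)))
  have hΨint : IntegrableOn g (uIcc 0 1) volume := by
    rw [uIcc_of_le zero_le_one, integrableOn_Icc_iff_integrableOn_Ioc]
    exact (intervalIntegrable_iff_integrableOn_Ioc_of_le zero_le_one).1 il_neg_log_div
  have hΦcont : ContinuousOn Φ (uIcc 0 (π/4)) :=
    intervalIntegral.continuousOn_primitive_interval_left hΦint
  have hΨcont : ContinuousOn Ψ (uIcc 0 1) :=
    intervalIntegral.continuousOn_primitive_interval_left hΨint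
  -- sequence tending to 0
  set c : ℕ → ℝ := fun n => (π/4) / (n+1) with hcdef
  have hc0 : ∀ n : ℕ, 0 < c n := fun n => by positivity
  have hc4 : ∀ n : ℕ, c n ≤ π/4 := by
    intro n
    rw [hcdef]
    apply div_le_self (by linarith)
    have : (0:ℝ) ≤ (n:ℝ) := Nat.cast_nonneg n
    linarith
  have hclim : Tendsto c atTop (𝓝 0) := by
    rw [hcdef]
    have : Tendsto (fun n : ℕ => 1 / ((n:ℝ) + 1)) atTop (𝓝 0) := tendsto_one_div_add_atTop_nhds_zero_nat
    have h2 := this.const_mul (π/4)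
    simpa [div_eq_mul_inv, mul_comm] using h2
  have htanc_mem : ∀ n, Real.tan (c n) ∈ Icc (0:ℝ) 1 := by
    intro n
    constructor
    · exact (Real.tan_pos_of_pos_of_lt_pi_div_two (hc0 n) (by linarith [hc4 n])).le
    · rw [← Real.tan_pi_div_four]
      apply StrictMonoOn.monotoneOn Real.strictMonoOn_tan
        ⟨by linarith [hc0 n], by linarith [hc4 n]⟩ ⟨by linarith, by linarith⟩ (hc4 n)
  have htanlim : Tendsto (fun n => Real.tan (c n)) atTop (𝓝 0) := by
    have : ContinuousAt Real.tan 0 := by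
      apply Real.continuousAt_tan.2
      simp
    have h2 := this.tendsto.comp hclim
    simpa [Real.tan_zero, Function.comp_def] using h2
  -- limits
  have hlim1 : Tendsto (fun n => Φ (c n)) atTop (𝓝 (Φ 0)) := by
    apply ((hΦcont 0 (by rw [uIcc_of_le hpi4]; exact ⟨le_rfl, hpi4⟩)).tendsto).comp
    apply tendsto_nhdsWithin_of_tendsto_nhds_of_eventually_within _ hclim
    filter_upwards with n
    rw [uIcc_of_le hpi4]
    exact ⟨(hc0 n).le, hc4 n⟩
  have hlim2 : Tendsto (fun n => Ψ (Real.tan (c n))) atTop (𝓝 (Ψ 0)) := by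
    apply ((hΨcont 0 (by rw [uIcc_of_le zero_le_one]; exact ⟨le_rfl, zero_le_one⟩)).tendsto).comp
    apply tendsto_nhdsWithin_of_tendsto_nhds_of_eventually_within _ htanlim
    filter_upwards with n
    rw [uIcc_of_le zero_le_one]
    exact htanc_mem n
  have heqseq : (fun n => Φ (c n)) = fun n => Ψ (Real.tan (c n)) := by
    funext n
    exact hsub (c n) (hc0 n) (hc4 n)
  rw [heqseq] at hlim1
  exact tendsto_nhds_unique hlim1 hlim2




lemma two_J_eq : (2:ℝ) * ∫ x in (0:ℝ)..(π/4), Real.log (Real.cos x)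
    = catalanG - (π/2) * Real.log 2 := by
  have hpi := Real.pi_pos
  have hL : IntervalIntegrable (fun x => Real.log (Real.sin x)) volume 0 (π/4) :=
    il_log_sin (by positivity) (by linarith)
  have hM : IntervalIntegrable (fun x => Real.log (Real.sin x)) volume 0 (π/2) :=
    il_log_sin (by positivity) le_rfl
  have h2 : IntervalIntegrable (fun x => Real.log (Real.sin x)) volume (π/4) (π/2) :=
    hM.mono_set (by
      rw [Set.uIcc_of_le (by linarith), Set.uIcc_of_le (by linarith)]
      exact Icc_subset_Icc (by positivity) le_rfl)
  have hb : ∫ x in (π/4:ℝ)..(π/2), Real.log (Real.sin x)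
      = ∫ x in (0:ℝ)..(π/4), Real.log (Real.cos x) := by
    have := intervalIntegral.integral_comp_sub_left (a := (0:ℝ)) (b := π/4)
      (fun u => Real.log (Real.sin u)) (π/2)
    rw [show π/2 - π/4 = π/4 by ring, sub_zero] at this
    rw [← this]
    apply intervalIntegral.integral_congr
    intro x _
    simp only [Real.sin_pi_div_two_sub]
  have ha := intervalIntegral.integral_add_adjacent_intervals hL h2
  have hKsub : ∫ x in (0:ℝ)..(π/4), (Real.log (Real.cos x) - Real.log (Real.sin x))
      = (∫ x in (0:ℝ)..(π/4), Real.log (Real.cos x))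
        - ∫ x in (0:ℝ)..(π/4), Real.log (Real.sin x) :=
    intervalIntegral.integral_sub il_log_cos hL
  have hK : (∫ x in (0:ℝ)..(π/4), Real.log (Real.cos x))
      - (∫ x in (0:ℝ)..(π/4), Real.log (Real.sin x)) = catalanG := by
    rw [← hKsub, log_cot_integral, ← catalanG_eq_integral]
  have hM2 := integral_log_sin_half
  rw [hb] at ha
  -- ha : L + J = M ; hK : J - L = catalanG
  linarith [ha, hK, hM2]

theorem log_one_add_cos_integral :
    (∫ x in (0 : ℝ)..(π / 2), Real.log (1 + Real.cos x)) =
      2 * catalanG - (π / 2) * Real.log 2 := by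
  have hpi := Real.pi_pos
  have hcos_half_pos : ∀ x ∈ Set.uIcc (0:ℝ) (π/2), 0 < Real.cos (x/2) := by
    intro x hx
    rw [Set.uIcc_of_le (by linarith)] at hx
    exact Real.cos_pos_of_mem_Ioo ⟨by linarith [hx.1], by linarith [hx.2]⟩
  have hcong : ∀ x ∈ Set.uIcc (0:ℝ) (π/2),
      Real.log (1 + Real.cos x) = Real.log 2 + 2 * Real.log (Real.cos (x/2)) := by
    intro x hx
    have hc := hcos_half_pos x hx
    have hsq : 1 + Real.cos x = 2 * Real.cos (x/2) ^ 2 := by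
      have := Real.cos_sq (x/2)
      rw [show 2 * (x/2) = x by ring] at this
      rw [this]; ring
    rw [hsq, Real.log_mul two_ne_zero (by positivity), Real.log_pow]
    push_cast
    ring
  rw [intervalIntegral.integral_congr hcong]
  have hint : IntervalIntegrable (fun x => Real.log (Real.cos (x/2))) volume 0 (π/2) := by
    apply ContinuousOn.intervalIntegrable
    apply ContinuousOn.log
    · exact (Real.continuous_cos.comp (continuous_id.div_const 2)).continuousOn
    · exact fun x hx => (hcos_half_pos x hx).ne'
  have hsplit : ∫ x in (0:ℝ)..(π/2), (Real.log 2 + 2 * Real.log (Real.cos (x/2)))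
      = (π/2) * Real.log 2 + 2 * ∫ x in (0:ℝ)..(π/2), Real.log (Real.cos (x/2)) := by
    rw [intervalIntegral.integral_add intervalIntegrable_const
      (hint.const_mul 2), intervalIntegral.integral_const_mul]
    simp [smul_eq_mul]
  rw [hsplit]
  have hcomp : ∫ x in (0:ℝ)..(π/2), Real.log (Real.cos (x/2))
      = 2 * ∫ x in (0:ℝ)..(π/4), Real.log (Real.cos x) := by
    have := intervalIntegral.integral_comp_div (a := (0:ℝ)) (b := π/2)
      (fun u => Real.log (Real.cos u)) (c := 2) (by norm_num)
    rw [show (0:ℝ)/2 = 0 by ring, show (π/2)/2 = π/4 by ring] at this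
    rw [this]
    simp [smul_eq_mul]
  rw [hcomp, two_J_eq]
  ring
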